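/- Let R be a commutative ring, r ≥ 1 an integer, s ∈ R, and R' = R[t]/(t^r − s). For every integer l with 0 < l ≤ r, the preimage under the canonical ring map R → R' of the ideal t^l R' generated by t^l is the principal ideal sR; that is, for a ∈ R, the image of a in R' lies in t^l R' if and only if a ∈ sR. -/
import Mathlib


open Polynomial

/-- Let `R` be a commutative ring, `r ≥ 1`, `s ∈ R`, and `R' = R[t]/(t^r - s)`.
For every integer `l` with `0 < l ≤ r`, the preimage under the canonical map `R → R'`
of the ideal generated by `t^l` is the principal ideal `sR`: for `a ∈ R`, the image of
`a` in `R'` lies in `t^l R'` if and only if `a ∈ sR`. -/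
theorem mem_span_tpow_iff_mem_span_s
    (R : Type*) [CommRing R] (r : ℕ) (hr : 1 ≤ r) (s : R)
    (l : ℕ) (hl0 : 0 < l) (hlr : l ≤ r) (a : R) :
    Ideal.Quotient.mk (Ideal.span {(X : R[X]) ^ r - C s}) (C a) ∈
      Ideal.span {Ideal.Quotient.mk (Ideal.span {(X : R[X]) ^ r - C s}) X ^ l} ↔
    a ∈ Ideal.span {s} := by
  constructor
  · intro h
    rw [Ideal.mem_span_singleton] at h
    obtain ⟨c, hc⟩ := h
    obtain ⟨p, rfl⟩ := Ideal.Quotient.mk_surjective c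
    rw [← map_pow, ← map_mul, Ideal.Quotient.eq, Ideal.mem_span_singleton] at hc
    obtain ⟨q, hq⟩ := hc
    rw [Ideal.mem_span_singleton]
    have h0 := congrArg (fun f => Polynomial.coeff f 0) hq
    have hln : ¬ (0 = l) := by omega
    have hrn : ¬ (0 = r) := by omega
    simp only [coeff_sub, coeff_C_zero, mul_coeff_zero, coeff_X_pow, if_neg hln, if_neg hrn,
      zero_mul, sub_zero, zero_sub, neg_mul] at h0
    exact ⟨-q.coeff 0, by rw [h0]; ring⟩
  · intro h
    rw [Ideal.mem_span_singleton] at h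
    obtain ⟨c, rfl⟩ := h
    rw [Ideal.mem_span_singleton]
    refine ⟨Ideal.Quotient.mk _ (C c * X ^ (r - l)), ?_⟩
    rw [← map_pow, ← map_mul, Ideal.Quotient.eq, Ideal.mem_span_singleton]
    refine ⟨-C c, ?_⟩
    have : (X : R[X]) ^ l * (C c * X ^ (r - l)) = C c * X ^ r := by
      rw [mul_comm, mul_assoc, ← pow_add, Nat.sub_add_cancel hlr]
    rw [this, map_mul]
    ring
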